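/- arXiv:2510.01905 — 4 statements merged into one kernel-verified Lean document; each statement's English description precedes it below -/
import Mathlib

section
/- Let P₁ and P₂ be linear subspaces of ℝⁿ of the same dimension, with orthogonal projections π₁, π₂. Then the operator norm of π₁ − π₂ is at most sup{dist(z, P₂) : z ∈ P₁, ‖z‖ ≤ 1} + sup{dist(z, P₁) : z ∈ P₂, ‖z‖ ≤ 1}. -/
open Metric

section aux

variable {n : ℕ}

local notation "E" => EuclideanSpace ℝ (Fin n)

private lemma infDist_eq_norm (K : Submodule ℝ E) (v : E) :
    Metric.infDist v (K : Set E) = ‖v - Submodule.orthogonalProjection K v‖ := by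
  rw [Metric.infDist_eq_iInf, show ‖v - (Submodule.orthogonalProjection K v : E)‖ = ‖v - K.starProjection v‖ from rfl,
    Submodule.starProjection_minimal]
  simp_rw [dist_eq_norm]
  rfl

private lemma sup_nonneg' (P Q : Submodule ℝ E) :
    0 ≤ ⨆ z : P, ⨆ _ : ‖(z : E)‖ ≤ 1, Metric.infDist (z : E) (Q : Set E) := by
  have hb : BddAbove (Set.range fun z : P =>
      ⨆ _ : ‖(z : E)‖ ≤ 1, Metric.infDist (z : E) (Q : Set E)) := by
    refine ⟨1, ?_⟩
    rintro x ⟨z, rfl⟩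
    refine Real.iSup_le (fun h => ?_) zero_le_one
    calc Metric.infDist (z : E) (Q : Set E) ≤ dist (z : E) 0 :=
          Metric.infDist_le_dist_of_mem Q.zero_mem
      _ = ‖(z : E)‖ := by simp
      _ ≤ 1 := h
  have h0 : (⨆ _ : ‖((0 : P) : E)‖ ≤ 1, Metric.infDist ((0 : P) : E) (Q : Set E)) = 0 := by
    rw [ciSup_pos (by simp)]
    exact Metric.infDist_zero_of_mem Q.zero_mem
  calc (0:ℝ) = _ := h0.symm
    _ ≤ _ := le_ciSup hb (0 : P)

private lemma dist_le_sup (P Q : Submodule ℝ E) (z : E) (hz : z ∈ P) (h1 : ‖z‖ ≤ 1) :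
    Metric.infDist z (Q : Set E) ≤
      ⨆ w : P, ⨆ _ : ‖(w : E)‖ ≤ 1, Metric.infDist (w : E) (Q : Set E) := by
  have hb : BddAbove (Set.range fun w : P =>
      ⨆ _ : ‖(w : E)‖ ≤ 1, Metric.infDist (w : E) (Q : Set E)) := by
    refine ⟨1, ?_⟩
    rintro x ⟨w, rfl⟩
    refine Real.iSup_le (fun h => ?_) zero_le_one
    calc Metric.infDist (w : E) (Q : Set E) ≤ dist (w : E) 0 :=
          Metric.infDist_le_dist_of_mem Q.zero_mem
      _ = ‖(w : E)‖ := by simp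
      _ ≤ 1 := h
  have := le_ciSup hb (⟨z, hz⟩ : P)
  refine le_trans ?_ this
  rw [ciSup_pos h1]

/-- Homogeneous bound: for v ∈ P, dist(v, Q) ≤ δ(P,Q) * ‖v‖. -/
private lemma dist_le_sup_mul (P Q : Submodule ℝ E) (v : E) (hv : v ∈ P) :
    Metric.infDist v (Q : Set E) ≤
      (⨆ w : P, ⨆ _ : ‖(w : E)‖ ≤ 1, Metric.infDist (w : E) (Q : Set E)) * ‖v‖ := by
  rcases eq_or_ne v 0 with rfl | hne
  · simp [Metric.infDist_zero_of_mem Q.zero_mem]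
  · have hpos : (0:ℝ) < ‖v‖ := norm_pos_iff.mpr hne
    set c : ℝ := ‖v‖⁻¹
    have hc : 0 < c := inv_pos.mpr hpos
    have hmem : c • v ∈ P := P.smul_mem c hv
    have hnorm : ‖c • v‖ ≤ 1 := by
      rw [norm_smul]
      simp only [c, norm_inv, norm_norm]
      rw [inv_mul_cancel₀ hpos.ne']
    have key := dist_le_sup P Q (c • v) hmem hnorm
    have hscale : Metric.infDist (c • v) (Q : Set E) = c * Metric.infDist v (Q : Set E) := by
      rw [infDist_eq_norm, infDist_eq_norm, map_smul]
      have : c • v - ((c • (Submodule.orthogonalProjection Q v) : Q) : E) = c • (v - Submodule.orthogonalProjection Q v) := by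
        push_cast
        rw [smul_sub]
      rw [this, norm_smul]
      simp [c, abs_of_pos hc]
    rw [hscale] at key
    have := mul_le_mul_of_nonneg_right key (le_of_lt hpos)
    calc Metric.infDist v (Q : Set E)
        = c * Metric.infDist v (Q : Set E) * ‖v‖ := by
          rw [mul_comm c, mul_assoc, show c * ‖v‖ = 1 from inv_mul_cancel₀ hpos.ne', mul_one]
      _ ≤ _ := this

end aux

/-- Let `P₁, P₂` be linear subspaces of `ℝⁿ` of the same dimension, with orthogonal
projections `π₁, π₂`. Then `‖π₁ − π₂‖` (operator norm) is at most
`sup{dist(z, P₂) : z ∈ P₁, ‖z‖ ≤ 1} + sup{dist(z, P₁) : z ∈ P₂, ‖z‖ ≤ 1}`. -/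
theorem orthogonalProjection_dist_le {n : ℕ}
    (P₁ P₂ : Submodule ℝ (EuclideanSpace ℝ (Fin n)))
    (hdim : Module.finrank ℝ P₁ = Module.finrank ℝ P₂) :
    ‖P₁.subtypeL.comp (Submodule.orthogonalProjection P₁) -
        P₂.subtypeL.comp (Submodule.orthogonalProjection P₂)‖ ≤
      (⨆ z : P₁, ⨆ _ : ‖(z : EuclideanSpace ℝ (Fin n))‖ ≤ 1,
        Metric.infDist (z : EuclideanSpace ℝ (Fin n))
          (P₂ : Set (EuclideanSpace ℝ (Fin n)))) +
      (⨆ z : P₂, ⨆ _ : ‖(z : EuclideanSpace ℝ (Fin n))‖ ≤ 1,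
        Metric.infDist (z : EuclideanSpace ℝ (Fin n))
          (P₁ : Set (EuclideanSpace ℝ (Fin n)))) := by
  set E := EuclideanSpace ℝ (Fin n)
  set δ₁ := ⨆ z : P₁, ⨆ _ : ‖(z : E)‖ ≤ 1, Metric.infDist (z : E) (P₂ : Set E) with hδ₁
  set δ₂ := ⨆ z : P₂, ⨆ _ : ‖(z : E)‖ ≤ 1, Metric.infDist (z : E) (P₁ : Set E) with hδ₂
  have hδ₁0 : 0 ≤ δ₁ := sup_nonneg' P₁ P₂
  have hδ₂0 : 0 ≤ δ₂ := sup_nonneg' P₂ P₁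
  apply ContinuousLinearMap.opNorm_le_bound _ (by positivity)
  intro x
  simp only [ContinuousLinearMap.sub_apply, ContinuousLinearMap.comp_apply,
    Submodule.subtypeL_apply]
  set π₁x : E := (Submodule.orthogonalProjection P₁ x : E)
  set π₂x : E := (Submodule.orthogonalProjection P₂ x : E)
  set u : E := x - π₂x with hu
  -- key bound 1: ‖π₁ u‖ ≤ δ₁ ‖u‖ where u ∈ P₂ᗮ
  have humem : u ∈ P₂ᗮ := Submodule.sub_starProjection_mem_orthogonal x
  set v : E := (Submodule.orthogonalProjection P₁ u : E) with hv
  have hvmem : v ∈ P₁ := Submodule.coe_mem _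
  have h1 : ‖v‖ ≤ δ₁ * ‖u‖ := by
    have hsq : ‖v‖ ^ 2 = (inner ℝ v u : ℝ) := by
      have h0 : inner ℝ v (u - v) = (0:ℝ) := by
        have := Submodule.sub_starProjection_mem_orthogonal (K := P₁) u
        exact (Submodule.mem_orthogonal P₁ (u - v)).mp this v hvmem
      rw [inner_sub_right] at h0
      rw [← real_inner_self_eq_norm_sq]
      linarith
    have hsplit : (inner ℝ v u : ℝ) = inner ℝ (v - (Submodule.orthogonalProjection P₂ v : E)) u := by
      have h0 : inner ℝ ((Submodule.orthogonalProjection P₂ v : E)) u = (0:ℝ) := by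
        exact humem _ (Submodule.coe_mem _)
      rw [inner_sub_left, h0, sub_zero]
    have hcs : (inner ℝ (v - (Submodule.orthogonalProjection P₂ v : E)) u : ℝ) ≤
        ‖v - (Submodule.orthogonalProjection P₂ v : E)‖ * ‖u‖ := real_inner_le_norm _ _
    have hdist : ‖v - (Submodule.orthogonalProjection P₂ v : E)‖ = Metric.infDist v (P₂ : Set E) :=
      (infDist_eq_norm P₂ v).symm
    have hδ : Metric.infDist v (P₂ : Set E) ≤ δ₁ * ‖v‖ := dist_le_sup_mul P₁ P₂ v hvmem
    have hfin : ‖v‖ ^ 2 ≤ δ₁ * ‖v‖ * ‖u‖ := by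
      calc ‖v‖ ^ 2 = inner ℝ v u := hsq
        _ ≤ ‖v - (Submodule.orthogonalProjection P₂ v : E)‖ * ‖u‖ := by rw [hsplit]; exact hcs
        _ = Metric.infDist v (P₂ : Set E) * ‖u‖ := by rw [hdist]
        _ ≤ δ₁ * ‖v‖ * ‖u‖ := mul_le_mul_of_nonneg_right hδ (norm_nonneg _)
    rcases eq_or_lt_of_le (norm_nonneg v) with hv0 | hv0
    · rw [← hv0]; positivity
    · have : ‖v‖ * ‖v‖ ≤ (δ₁ * ‖u‖) * ‖v‖ := by nlinarith
      exact le_of_mul_le_mul_right this hv0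
  -- key bound 2: ‖π₂x - π₁(π₂x)‖ ≤ δ₂ ‖π₂x‖
  have h2 : ‖π₂x - (Submodule.orthogonalProjection P₁ π₂x : E)‖ ≤ δ₂ * ‖π₂x‖ := by
    rw [← infDist_eq_norm P₁ π₂x]
    exact dist_le_sup_mul P₂ P₁ π₂x (Submodule.coe_mem _)
  -- norms of u and π₂x bounded by ‖x‖
  have hπ₂ : ‖π₂x‖ ≤ ‖x‖ := by
    simpa [π₂x] using (Submodule.orthogonalProjection P₂).le_opNorm x |>.trans
      (mul_le_of_le_one_left (norm_nonneg _) (Submodule.orthogonalProjection_norm_le P₂))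
  have hu' : ‖u‖ ≤ ‖x‖ := by
    have : u = (Submodule.orthogonalProjection P₂ᗮ x : E) := (Submodule.starProjection_orthogonal_val x).symm
    rw [this]
    simpa using (Submodule.orthogonalProjection P₂ᗮ).le_opNorm x |>.trans
      (mul_le_of_le_one_left (norm_nonneg _) (Submodule.orthogonalProjection_norm_le P₂ᗮ))
  -- decomposition
  have hdecomp : π₁x - π₂x = v + ((Submodule.orthogonalProjection P₁ π₂x : E) - π₂x) := by
    have : (Submodule.orthogonalProjection P₁ u : E)
        = π₁x - (Submodule.orthogonalProjection P₁ π₂x : E) := by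
      rw [hu, map_sub]
      push_cast
      abel
    rw [hv, this]; abel
  calc ‖π₁x - π₂x‖ = ‖v + ((Submodule.orthogonalProjection P₁ π₂x : E) - π₂x)‖ := by rw [hdecomp]
    _ ≤ ‖v‖ + ‖(Submodule.orthogonalProjection P₁ π₂x : E) - π₂x‖ := norm_add_le _ _
    _ = ‖v‖ + ‖π₂x - (Submodule.orthogonalProjection P₁ π₂x : E)‖ := by rw [norm_sub_rev]
    _ ≤ δ₁ * ‖u‖ + δ₂ * ‖π₂x‖ := add_le_add h1 h2
    _ ≤ δ₁ * ‖x‖ + δ₂ * ‖x‖ := add_le_add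
        (mul_le_mul_of_nonneg_left hu' hδ₁0) (mul_le_mul_of_nonneg_left hπ₂ hδ₂0)
    _ = (δ₁ + δ₂) * ‖x‖ := by ring
end

section
/- Let Q₁, Q₂ be linear subspaces of ℝⁿ of the same dimension and let x, y be unit vectors. Suppose that for all u ∈ Q₂ one has |⟪u, y⟫| ≤ (1/200)‖u‖. Then for every z ∈ Q₂ + ℝy with ‖z‖ ≤ 1, one has dist(z, Q₁ + ℝx) ≤ 2·(δ(Q₁,Q₂) + δ(ℝx, ℝy)), where δ(V,W) := sup{dist(w, V) : w ∈ W, ‖w‖ ≤ 1}. -/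
open Metric Pointwise

set_option maxHeartbeats 1000000

/-- The one-sided Hausdorff deviation `δ(V,W) = sup{dist(w, V) : w ∈ W, ‖w‖ ≤ 1}`. -/
noncomputable def subDev {n : ℕ}
    (V W : Submodule ℝ (EuclideanSpace ℝ (Fin n))) : ℝ :=
  ⨆ w : W, ⨆ _ : ‖(w : EuclideanSpace ℝ (Fin n))‖ ≤ 1,
    Metric.infDist (w : EuclideanSpace ℝ (Fin n)) (V : Set (EuclideanSpace ℝ (Fin n)))

lemma smul_set_submodule (c : ℝ) (hc : c ≠ 0) (V : Submodule ℝ (EuclideanSpace ℝ (Fin n))) :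
    c • (V : Set (EuclideanSpace ℝ (Fin n))) = V := by
  ext z
  rw [Set.mem_smul_set_iff_inv_smul_mem₀ hc]
  exact V.smul_mem_iff (inv_ne_zero hc)

lemma le_subDev' (V W : Submodule ℝ (EuclideanSpace ℝ (Fin n)))
    (w : EuclideanSpace ℝ (Fin n)) (hw : w ∈ W) (h1 : ‖w‖ ≤ 1) :
    Metric.infDist w (V : Set (EuclideanSpace ℝ (Fin n))) ≤ subDev V W := by
  have hb : BddAbove (Set.range fun w : W =>
      ⨆ _ : ‖(w : EuclideanSpace ℝ (Fin n))‖ ≤ 1,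
        Metric.infDist (w : EuclideanSpace ℝ (Fin n)) (V : Set (EuclideanSpace ℝ (Fin n)))) := by
    refine ⟨1, ?_⟩
    rintro a ⟨w, rfl⟩
    dsimp only
    by_cases h : ‖(w : EuclideanSpace ℝ (Fin n))‖ ≤ 1
    · rw [ciSup_pos h]
      calc Metric.infDist (w : EuclideanSpace ℝ (Fin n)) (V : Set _)
          ≤ dist (w : EuclideanSpace ℝ (Fin n)) 0 :=
            Metric.infDist_le_dist_of_mem V.zero_mem
        _ ≤ 1 := by simpa using h
    · rw [show (‖(w : EuclideanSpace ℝ (Fin n))‖ ≤ 1) = False from eq_false h]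
      simp [Real.iSup_of_isEmpty]
  have : (⨆ _ : ‖((⟨w, hw⟩ : W) : EuclideanSpace ℝ (Fin n))‖ ≤ 1,
      Metric.infDist ((⟨w, hw⟩ : W) : EuclideanSpace ℝ (Fin n)) (V : Set _)) ≤ subDev V W :=
    le_ciSup hb ⟨w, hw⟩
  rwa [ciSup_pos h1] at this

lemma subDev_nonneg (V W : Submodule ℝ (EuclideanSpace ℝ (Fin n))) : 0 ≤ subDev V W := by
  have := le_subDev' V W 0 W.zero_mem (by simp)
  rwa [Metric.infDist_zero_of_mem V.zero_mem] at this

lemma infDist_le_norm_mul_subDev (V W : Submodule ℝ (EuclideanSpace ℝ (Fin n)))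
    (w : EuclideanSpace ℝ (Fin n)) (hw : w ∈ W) :
    Metric.infDist w (V : Set (EuclideanSpace ℝ (Fin n))) ≤ ‖w‖ * subDev V W := by
  rcases eq_or_ne w 0 with rfl | hw0
  · simp [Metric.infDist_zero_of_mem V.zero_mem]
  · have hc : ‖w‖ ≠ 0 := norm_ne_zero_iff.mpr hw0
    set w' := ‖w‖⁻¹ • w with hw'
    have hw'W : w' ∈ W := W.smul_mem _ hw
    have hw'n : ‖w'‖ = 1 := by
      rw [hw', norm_smul, norm_inv, norm_norm, inv_mul_cancel₀ hc]
    have key : Metric.infDist w (V : Set _) = ‖w‖ * Metric.infDist w' (V : Set _) := by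
      have : w = ‖w‖ • w' := by rw [hw', smul_smul, mul_inv_cancel₀ hc, one_smul]
      calc Metric.infDist w (V : Set _)
          = Metric.infDist (‖w‖ • w') (‖w‖ • (V : Set _)) := by
            rw [← this, smul_set_submodule _ hc]
        _ = ‖(‖w‖)‖ * Metric.infDist w' (V : Set _) := infDist_smul₀ hc _ _
        _ = ‖w‖ * Metric.infDist w' (V : Set _) := by rw [norm_norm]
    rw [key]
    exact mul_le_mul_of_nonneg_left (le_subDev' V W w' hw'W hw'n.le) (norm_nonneg w)

lemma le_infDist' {E : Type*} [PseudoMetricSpace E] {s : Set E} (hs : s.Nonempty)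
    {x : E} {b : ℝ} (h : ∀ y ∈ s, b ≤ dist x y) : b ≤ Metric.infDist x s := by
  by_contra hlt
  push_neg at hlt
  obtain ⟨y, hy, hd⟩ := (Metric.infDist_lt_iff hs).mp hlt
  exact absurd (h y hy) (by linarith)

/-- Let `Q₁, Q₂` be subspaces of `ℝⁿ` of the same dimension, `x, y` unit vectors, with `y`
nearly orthogonal to `Q₂`: `|⟪u, y⟫| ≤ (1/200)‖u‖` for `u ∈ Q₂`. Then for every
`z ∈ Q₂ + ℝy` with `‖z‖ ≤ 1`, `dist(z, Q₁ + ℝx) ≤ 2·(δ(Q₁,Q₂) + δ(ℝx, ℝy))`. -/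
theorem dist_to_sum_span_le {n : ℕ}
    (Q₁ Q₂ : Submodule ℝ (EuclideanSpace ℝ (Fin n)))
    (hdim : Module.finrank ℝ Q₁ = Module.finrank ℝ Q₂)
    (x y : EuclideanSpace ℝ (Fin n)) (hx : ‖x‖ = 1) (hy : ‖y‖ = 1)
    (horth : ∀ u ∈ Q₂, |(inner ℝ u y : ℝ)| ≤ (1 / 200) * ‖u‖) :
    ∀ z ∈ (Q₂ ⊔ Submodule.span ℝ {y}), ‖z‖ ≤ 1 →
      Metric.infDist z ((Q₁ ⊔ Submodule.span ℝ {x} : Submodule ℝ _) :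
          Set (EuclideanSpace ℝ (Fin n))) ≤
        2 * (subDev Q₁ Q₂ + subDev (Submodule.span ℝ {x}) (Submodule.span ℝ {y})) := by
  intro z hz hz1
  obtain ⟨u, hu, v, hv, rfl⟩ := Submodule.mem_sup.mp hz
  set S : Submodule ℝ (EuclideanSpace ℝ (Fin n)) := Q₁ ⊔ Submodule.span ℝ {x} with hS
  -- inner product bound
  have hiv : |(inner ℝ u v : ℝ)| ≤ (1 / 200) * (‖u‖ * ‖v‖) := by
    obtain ⟨t, ht⟩ := Submodule.mem_span_singleton.mp hv
    rw [← ht, real_inner_smul_right, abs_mul, norm_smul, hy, Real.norm_eq_abs]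
    have := mul_le_mul_of_nonneg_left (horth u hu) (abs_nonneg t)
    nlinarith [this]
  have hsq : ‖u + v‖ ^ 2 = ‖u‖ ^ 2 + 2 * (inner ℝ u v : ℝ) + ‖v‖ ^ 2 := norm_add_sq_real u v
  have habs := abs_le.mp hiv
  have hz2 : ‖u + v‖ ^ 2 ≤ 1 := by nlinarith [norm_nonneg (u + v)]
  have hu2 : ‖u‖ ≤ 2 := by
    nlinarith [sq_nonneg (‖u‖ - ‖v‖), norm_nonneg u, norm_nonneg v]
  have hv2 : ‖v‖ ≤ 2 := by
    nlinarith [sq_nonneg (‖u‖ - ‖v‖), norm_nonneg u, norm_nonneg v]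
  -- triangle inequality for infDist
  have hQ₁ne : (Q₁ : Set (EuclideanSpace ℝ (Fin n))).Nonempty := ⟨0, Q₁.zero_mem⟩
  have hxne : ((Submodule.span ℝ {x} : Submodule ℝ _) :
      Set (EuclideanSpace ℝ (Fin n))).Nonempty := ⟨0, Submodule.zero_mem _⟩
  have htri : Metric.infDist (u + v) (S : Set (EuclideanSpace ℝ (Fin n))) ≤
      Metric.infDist u (Q₁ : Set (EuclideanSpace ℝ (Fin n))) +
      Metric.infDist v ((Submodule.span ℝ {x} : Submodule ℝ _) :
        Set (EuclideanSpace ℝ (Fin n))) := by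
    have key : ∀ p ∈ (Q₁ : Set (EuclideanSpace ℝ (Fin n))),
        ∀ q ∈ ((Submodule.span ℝ {x} : Submodule ℝ _) : Set (EuclideanSpace ℝ (Fin n))),
        Metric.infDist (u + v) (S : Set (EuclideanSpace ℝ (Fin n))) ≤ dist u p + dist v q := by
      intro p hp q hq
      have hpq : p + q ∈ S := Submodule.mem_sup.mpr ⟨p, hp, q, hq, rfl⟩
      calc Metric.infDist (u + v) (S : Set (EuclideanSpace ℝ (Fin n)))
          ≤ dist (u + v) (p + q) := Metric.infDist_le_dist_of_mem hpq
        _ ≤ dist u p + dist v q := dist_add_add_le u v p q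
    have h1 : Metric.infDist (u + v) (S : Set (EuclideanSpace ℝ (Fin n))) -
        Metric.infDist v ((Submodule.span ℝ {x} : Submodule ℝ _) :
          Set (EuclideanSpace ℝ (Fin n))) ≤
        Metric.infDist u (Q₁ : Set (EuclideanSpace ℝ (Fin n))) := by
      refine le_infDist' hQ₁ne fun p hp => ?_
      have h2 : Metric.infDist (u + v) (S : Set (EuclideanSpace ℝ (Fin n))) - dist u p ≤
          Metric.infDist v ((Submodule.span ℝ {x} : Submodule ℝ _) :
            Set (EuclideanSpace ℝ (Fin n))) := by
        refine le_infDist' hxne fun q hq => ?_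
        linarith [key p hp q hq]
      linarith
    linarith
  have hdu := infDist_le_norm_mul_subDev Q₁ Q₂ u hu
  have hdv := infDist_le_norm_mul_subDev (Submodule.span ℝ {x}) (Submodule.span ℝ {y}) v hv
  have hδ1 := subDev_nonneg Q₁ Q₂
  have hδ2 := subDev_nonneg (Submodule.span ℝ {x} : Submodule ℝ _) (Submodule.span ℝ {y})
  have h1 : ‖u‖ * subDev Q₁ Q₂ ≤ 2 * subDev Q₁ Q₂ :=
    mul_le_mul_of_nonneg_right hu2 hδ1
  have h2 : ‖v‖ * subDev (Submodule.span ℝ {x}) (Submodule.span ℝ {y}) ≤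
      2 * subDev (Submodule.span ℝ {x}) (Submodule.span ℝ {y}) :=
    mul_le_mul_of_nonneg_right hv2 hδ2
  linarith
end

section
/- Let f : [t₀, t₁] → ℝⁿ be continuous and suppose there is c > 0 such that for all s < t in [t₀, t₁], ⟪f(s), f(t) − f(s)⟫ ≥ c‖f(s)‖·‖f(t) − f(s)‖. Then for all s < t, ‖f(t)‖ − ‖f(s)‖ ≥ c‖f(t) − f(s)‖; in particular t ↦ ‖f(t)‖ is strictly increasing wherever f is non-constant. -/
/-- If `f : [t₀, t₁] → ℝⁿ` is continuous and for all `s < t`,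
`⟪f(s), f(t) − f(s)⟫ ≥ c‖f(s)‖·‖f(t) − f(s)‖` with `c > 0`, then for all `s < t`,
`‖f(t)‖ − ‖f(s)‖ ≥ c‖f(t) − f(s)‖`; in particular `t ↦ ‖f(t)‖` is strictly increasing
wherever `f` is non-constant. -/
theorem norm_increasing_of_transverse {n : ℕ} (t₀ t₁ : ℝ)
    (f : ℝ → EuclideanSpace ℝ (Fin n)) (c : ℝ) (hc : 0 < c)
    (hcont : ContinuousOn f (Set.Icc t₀ t₁))
    (hangle : ∀ s ∈ Set.Icc t₀ t₁, ∀ t ∈ Set.Icc t₀ t₁, s < t →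
      (inner ℝ (f s) (f t - f s) : ℝ) ≥ c * ‖f s‖ * ‖f t - f s‖) :
    ∀ s ∈ Set.Icc t₀ t₁, ∀ t ∈ Set.Icc t₀ t₁, s < t →
      ‖f t‖ - ‖f s‖ ≥ c * ‖f t - f s‖ ∧ (f s ≠ f t → ‖f s‖ < ‖f t‖) := by
  intro s hs t ht hst
  rcases le_or_gt c 1 with hc1 | hc1
  · -- case c ≤ 1: pointwise inequality
    have h := hangle s hs t ht hst
    have hexp : ‖f t‖^2 = ‖f s‖^2 + 2 * (inner ℝ (f s) (f t - f s) : ℝ) + ‖f t - f s‖^2 := by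
      have := norm_add_sq_real (f s) (f t - f s)
      simpa using this
    have h1 : 0 ≤ ‖f s‖ + c * ‖f t - f s‖ := by positivity
    have hsq : (‖f s‖ + c * ‖f t - f s‖)^2 ≤ ‖f t‖^2 := by
      nlinarith [sq_nonneg ‖f t - f s‖, norm_nonneg (f s), norm_nonneg (f t - f s),
        mul_nonneg (mul_nonneg (sub_nonneg.2 hc1) (by linarith : (0:ℝ) ≤ 1 + c))
          (sq_nonneg ‖f t - f s‖)]
    have hmain : ‖f s‖ + c * ‖f t - f s‖ ≤ ‖f t‖ := by
      nlinarith [norm_nonneg (f t)]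
    constructor
    · linarith
    · intro hne
      have hpos : 0 < ‖f t - f s‖ := by
        rw [norm_pos_iff, sub_ne_zero]; exact Ne.symm hne
      nlinarith
  · -- case c > 1: Cauchy–Schwarz forces degeneracy
    have key : ∀ a ∈ Set.Icc t₀ t₁, ∀ b ∈ Set.Icc t₀ t₁, a < b → f a ≠ f b → f a = 0 := by
      intro a ha b hb hab hne
      have h := hangle a ha b hb hab
      have hcs := real_inner_le_norm (f a) (f b - f a)
      have hpos : 0 < ‖f b - f a‖ := by
        rw [norm_pos_iff, sub_ne_zero]; exact Ne.symm hne
      have hprod : ‖f a‖ * ‖f b - f a‖ ≤ 0 := by nlinarith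
      have hle : ‖f a‖ ≤ 0 := by nlinarith
      simpa [norm_le_zero_iff] using hle
    have hft : f s = f t := by
      by_contra hne
      have hfs0 : f s = 0 := key s hs t ht hst hne
      have hftn : 0 < ‖f t‖ := by
        rw [norm_pos_iff]; intro h; exact hne (by rw [hfs0, h])
      have hsub : Set.Icc s t ⊆ Set.Icc t₀ t₁ := Set.Icc_subset_Icc hs.1 ht.2
      have hcont' : ContinuousOn (fun u => ‖f u‖) (Set.Icc s t) :=
        (hcont.mono hsub).norm
      have hmem : ‖f t‖ / 2 ∈ Set.Icc ‖f s‖ ‖f t‖ := by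
        rw [hfs0]; constructor <;> simp <;> linarith
      obtain ⟨u, hu, hfu⟩ := intermediate_value_Icc hst.le hcont' hmem
      have hfu : ‖f u‖ = ‖f t‖ / 2 := hfu
      have hun : f u ≠ f t := by
        intro h; rw [h] at hfu; linarith
      have hut : u < t := lt_of_le_of_ne hu.2 (by intro h; exact hun (by rw [h]))
      have h0 := key u (hsub hu) t ht hut hun
      rw [h0] at hfu; simp at hfu; linarith
    constructor
    · rw [hft]; simp
    · exact fun h => absurd hft h
end

section
/- Let B = B(y, r) ⊂ ℝⁿ be a ball, α > 0, and let f : ℝⁿ → ℝ satisfy C₀⁻¹ ≤ f ≤ C₀ and |f(x) − f(z)| ≤ C₁‖x − z‖^α for all x, z. Let E, F be Borel sets with E ∩ B and F ∩ B of finite 2-dimensional Hausdorff measure satisfying ℋ²(E ∩ B) ≤ C_d r² and ℋ²(F ∩ B) ≤ C_d r², and suppose ∫_{E ∩ B} f dℋ² ≤ ∫_{F ∩ B} f dℋ². Then ℋ²(E ∩ B) ≤ ℋ²(F ∩ B) + 2 C₀ C₁ C_d (2r)^α r² / 1, i.e. ℋ²(E ∩ B) ≤ ℋ²(F ∩ B)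 + 2^{1+α} C₀ C₁ C_d r^{2+α}. -/
open MeasureTheory

/-- Freezing the Hölder density at the center of the ball: if `C₀⁻¹ ≤ f ≤ C₀`,
`|f(x) − f(z)| ≤ C₁‖x − z‖^α`, `E ∩ B` and `F ∩ B` have `ℋ²`-measure at most `C_d r²`
in the ball `B = B(y, r)`, and `∫_{E ∩ B} f dℋ² ≤ ∫_{F ∩ B} f dℋ²`, then
`ℋ²(E ∩ B) ≤ ℋ²(F ∩ B) + 2^{1+α} C₀ C₁ C_d r^{2+α}`. -/
theorem weighted_minimizer_almost_minimal {n : ℕ}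
    (y : EuclideanSpace ℝ (Fin n)) (r α : ℝ) (hr : 0 < r) (hα : 0 < α)
    (C₀ C₁ Cd : ℝ) (hC₀ : 1 ≤ C₀) (hC₁ : 1 ≤ C₁) (hCd : 1 ≤ Cd)
    (f : EuclideanSpace ℝ (Fin n) → ℝ)
    (hf_lower : ∀ x, C₀⁻¹ ≤ f x) (hf_upper : ∀ x, f x ≤ C₀)
    (hf_holder : ∀ x z, |f x - f z| ≤ C₁ * ‖x - z‖ ^ α)
    (E F : Set (EuclideanSpace ℝ (Fin n)))
    (hE : MeasurableSet E) (hF : MeasurableSet F)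
    (hEfin : μH[2] (E ∩ Metric.ball y r) ≠ ⊤)
    (hFfin : μH[2] (F ∩ Metric.ball y r) ≠ ⊤)
    (hEb : μH[2] (E ∩ Metric.ball y r) ≤ ENNReal.ofReal (Cd * r ^ 2))
    (hFb : μH[2] (F ∩ Metric.ball y r) ≤ ENNReal.ofReal (Cd * r ^ 2))
    (hint : ∫ x in E ∩ Metric.ball y r, f x ∂(μH[2]) ≤
      ∫ x in F ∩ Metric.ball y r, f x ∂(μH[2])) :
    μH[2] (E ∩ Metric.ball y r) ≤ μH[2] (F ∩ Metric.ball y r) +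
      ENNReal.ofReal (2 ^ (1 + α) * C₀ * C₁ * Cd * r ^ (2 + α)) := by
  have hC₀pos : (0:ℝ) < C₀ := lt_of_lt_of_le one_pos hC₀
  have hC₁pos : (0:ℝ) < C₁ := lt_of_lt_of_le one_pos hC₁
  have hCdpos : (0:ℝ) < Cd := lt_of_lt_of_le one_pos hCd
  have hfy : (0:ℝ) < f y := lt_of_lt_of_le (inv_pos.mpr hC₀pos) (hf_lower y)
  -- continuity of f
  have hcont : Continuous f := by
    rw [Metric.continuous_iff]
    intro b ε hε
    have hδpos : (0:ℝ) < (ε / C₁) ^ (1/α) :=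
      Real.rpow_pos_of_pos (div_pos hε hC₁pos) _
    refine ⟨(ε / C₁) ^ (1/α), hδpos, fun a hab => ?_⟩
    have h1 : dist (f a) (f b) ≤ C₁ * ‖a - b‖ ^ α := by
      rw [Real.dist_eq]; exact hf_holder a b
    have h2 : ‖a - b‖ ^ α < ((ε / C₁) ^ (1/α)) ^ α := by
      apply Real.rpow_lt_rpow (norm_nonneg _) _ hα
      rwa [← dist_eq_norm]
    have h3 : ((ε / C₁) ^ (1/α) : ℝ) ^ α = ε / C₁ := by
      rw [← Real.rpow_mul (div_pos hε hC₁pos).le, one_div,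
        inv_mul_cancel₀ hα.ne', Real.rpow_one]
    calc dist (f a) (f b) ≤ C₁ * ‖a - b‖ ^ α := h1
      _ < C₁ * (ε / C₁) := by
          rw [← h3]; exact (mul_lt_mul_iff_right₀ hC₁pos).mpr h2
      _ = ε := mul_div_cancel₀ _ hC₁pos.ne'
  set B := Metric.ball y r with hBdef
  set μ := (μH[2] : Measure (EuclideanSpace ℝ (Fin n)))
  set a := (μ (E ∩ B)).toReal with ha
  set b := (μ (F ∩ B)).toReal with hb
  have ha0 : 0 ≤ a := ENNReal.toReal_nonneg
  have hb0 : 0 ≤ b := ENNReal.toReal_nonneg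
  have hCdr : (0:ℝ) ≤ Cd * r ^ 2 := by positivity
  have haCd : a ≤ Cd * r ^ 2 := by
    rw [ha]
    exact ENNReal.toReal_le_of_le_ofReal hCdr hEb
  have hbCd : b ≤ Cd * r ^ 2 := by
    rw [hb]
    exact ENNReal.toReal_le_of_le_ofReal hCdr hFb
  set c := C₁ * (2 * r) ^ α with hc
  have hc0 : 0 ≤ c := by positivity
  -- pointwise bounds on the ball
  have hball : ∀ x ∈ B, f y - c ≤ f x ∧ f x ≤ f y + c := by
    intro x hx
    have hd : ‖x - y‖ ≤ 2 * r := by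
      have : dist x y < r := Metric.mem_ball.mp hx
      rw [← dist_eq_norm]
      linarith
    have h1 : |f x - f y| ≤ c := by
      refine (hf_holder x y).trans ?_
      rw [hc]
      exact mul_le_mul_of_nonneg_left
        (Real.rpow_le_rpow (norm_nonneg _) hd hα.le) hC₁pos.le
    constructor <;> [skip; skip] <;> cases abs_le.mp h1 <;> linarith [abs_le.mp h1]
  have hmE : MeasurableSet (E ∩ B) := hE.inter measurableSet_ball
  have hmF : MeasurableSet (F ∩ B) := hF.inter measurableSet_ball
  have hbdd : ∀ x, ‖f x‖ ≤ C₀ := by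
    intro x
    rw [Real.norm_eq_abs, abs_le]
    constructor
    · linarith [hf_lower x, inv_pos.mpr hC₀pos]
    · exact hf_upper x
  have hintE : IntegrableOn f (E ∩ B) μ :=
    Measure.integrableOn_of_bounded hEfin hcont.aestronglyMeasurable
      (Filter.Eventually.of_forall hbdd)
  have hintF : IntegrableOn f (F ∩ B) μ :=
    Measure.integrableOn_of_bounded hFfin hcont.aestronglyMeasurable
      (Filter.Eventually.of_forall hbdd)
  have hlow : (f y - c) * a ≤ ∫ x in E ∩ B, f x ∂μ := by
    have := setIntegral_mono_on (integrableOn_const hEfin)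
      hintE hmE (fun x hx => (hball x hx.2).1)
    simpa [setIntegral_const, mul_comm, Measure.real] using this
  have hhigh : (∫ x in F ∩ B, f x ∂μ) ≤ (f y + c) * b := by
    have := setIntegral_mono_on hintF
      (integrableOn_const hFfin) hmF
      (fun x hx => (hball x hx.2).2)
    simpa [setIntegral_const, mul_comm, Measure.real] using this
  -- combine
  have hkey : f y * (a - b) ≤ c * (a + b) := by nlinarith [hlow.trans (hint.trans hhigh)]
  have hfyinv : (f y)⁻¹ ≤ C₀ := by
    rw [← inv_inv C₀]
    exact inv_anti₀ (inv_pos.mpr hC₀pos) (hf_lower y)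
  have hab : a - b ≤ C₀ * (c * (2 * (Cd * r ^ 2))) := by
    have h1 : a - b ≤ (f y)⁻¹ * (c * (a + b)) := by
      have h := mul_le_mul_of_nonneg_left hkey (le_of_lt (inv_pos.mpr hfy))
      rwa [← mul_assoc, inv_mul_cancel₀ hfy.ne', one_mul] at h
    have h2 : c * (a + b) ≤ c * (2 * (Cd * r ^ 2)) := by
      apply mul_le_mul_of_nonneg_left _ hc0
      linarith
    calc a - b ≤ (f y)⁻¹ * (c * (a + b)) := h1
      _ ≤ C₀ * (c * (a + b)) := by
          apply mul_le_mul_of_nonneg_right hfyinv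
          positivity
      _ ≤ C₀ * (c * (2 * (Cd * r ^ 2))) :=
          mul_le_mul_of_nonneg_left h2 hC₀pos.le
  set K := 2 ^ (1 + α) * C₀ * C₁ * Cd * r ^ (2 + α) with hK
  have hKeq : K = C₀ * (c * (2 * (Cd * r ^ 2))) := by
    rw [hK, hc, Real.rpow_add two_pos, Real.rpow_one, Real.rpow_add hr,
      Real.mul_rpow (by norm_num : (0:ℝ) ≤ 2) hr.le]
    have : r ^ (2:ℝ) = r ^ 2 := by
      rw [show (2:ℝ) = ((2:ℕ):ℝ) by norm_num, Real.rpow_natCast]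
    rw [this]; ring
  have hfin : a ≤ b + K := by rw [hKeq]; linarith
  calc μ (E ∩ B) = ENNReal.ofReal a := (ENNReal.ofReal_toReal hEfin).symm
    _ ≤ ENNReal.ofReal (b + K) := ENNReal.ofReal_le_ofReal hfin
    _ = ENNReal.ofReal b + ENNReal.ofReal K := ENNReal.ofReal_add hb0 (by rw [hKeq]; positivity)
    _ = μ (F ∩ B) + ENNReal.ofReal K := by rw [hb, ENNReal.ofReal_toReal hFfin]
end
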